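/- For every positive integer n, c_n(n/γ(n)) = (−1)^{ω(n)} · n/γ(n), where γ(n) = ∏_{p|n} p is the square-free kernel of n and ω(n) the number of distinct prime factors of n. -/

import Mathlib

open Polynomial Finset

lemma sum_moebius_divisors (m : ℕ) :
    ∑ d ∈ m.divisors, ((ArithmeticFunction.moebius d : ℤ) : ℂ)
      = if m = 1 then 1 else 0 := by
  have h := congrArg (fun f => f m) ArithmeticFunction.moebius_mul_coe_zeta
  simp only [ArithmeticFunction.coe_mul_zeta_apply,
    ArithmeticFunction.one_apply] at h
  calc ∑ d ∈ m.divisors, ((ArithmeticFunction.moebius d : ℤ) : ℂ)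
      = ((∑ d ∈ m.divisors, ArithmeticFunction.moebius d : ℤ) : ℂ) := by push_cast; rfl
    _ = _ := by rw [h]; split <;> simp

-- geometric sum lemma
lemma exp_sum_Icc (m : ℕ) (hm : 0 < m) (a : ℤ) :
    ∑ k ∈ Finset.Icc 1 m, Complex.exp (2 * (Real.pi : ℂ) * Complex.I * (k : ℂ) * (a : ℂ) / (m : ℂ))
      = if (m : ℤ) ∣ a then (m : ℂ) else 0 := by
  have hm0 : (m : ℂ) ≠ 0 := Nat.cast_ne_zero.mpr hm.ne'
  set z : ℂ := Complex.exp (2 * (Real.pi : ℂ) * Complex.I * (a : ℂ) / (m : ℂ)) with hz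
  have hpow : ∀ k : ℕ, Complex.exp (2 * (Real.pi : ℂ) * Complex.I * (k : ℂ) * (a : ℂ) / (m : ℂ)) = z ^ k := by
    intro k
    rw [hz, ← Complex.exp_nat_mul]
    ring_nf
  have hzm : z ^ m = 1 := by
    rw [hz, ← Complex.exp_nat_mul]
    have : (m : ℂ) * (2 * (Real.pi : ℂ) * Complex.I * (a : ℂ) / (m : ℂ))
        = (a : ℂ) * (2 * (Real.pi : ℂ) * Complex.I) := by
      field_simp
    rw [this]
    exact_mod_cast Complex.exp_int_mul_two_pi_mul_I a
  have key : Finset.Icc 1 m = Finset.map ⟨fun k => k + 1, add_left_injective 1⟩ (Finset.range m) := by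
    ext x
    simp only [Finset.mem_Icc, Finset.mem_map, Finset.mem_range, Function.Embedding.coeFn_mk]
    constructor
    · rintro ⟨h1, h2⟩; exact ⟨x - 1, by omega, by omega⟩
    · rintro ⟨y, hy, rfl⟩; omega
  simp_rw [hpow, key, Finset.sum_map, Function.Embedding.coeFn_mk]
  by_cases h : (m : ℤ) ∣ a
  · have hz1 : z = 1 := by
      obtain ⟨c, rfl⟩ := h
      rw [hz]
      have : (2 * (Real.pi : ℂ) * Complex.I * ((m : ℤ) * c : ℤ) / (m : ℂ))
          = (c : ℂ) * (2 * (Real.pi : ℂ) * Complex.I) := by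
        push_cast
        field_simp
      rw [this]
      exact_mod_cast Complex.exp_int_mul_two_pi_mul_I c
    simp [hz1, h]
  · have hz1 : z ≠ 1 := by
      intro hz1
      rw [hz, Complex.exp_eq_one_iff] at hz1
      obtain ⟨c, hc⟩ := hz1
      apply h
      have h2 : (2 * (Real.pi : ℂ) * Complex.I) ≠ 0 := by
        simp [Real.pi_ne_zero, Complex.I_ne_zero, Complex.ofReal_ne_zero]
      have : (a : ℂ) = (c : ℂ) * (m : ℂ) := by
        field_simp at hc
        -- hc : 2 * π * I * a = c * (2 * π * I) * m
        have := hc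
        apply mul_left_cancel₀ h2
        rw [mul_comm (2 * (Real.pi:ℂ) * Complex.I) ((c:ℂ) * (m:ℂ))]
        linear_combination (2 * (Real.pi:ℂ) * Complex.I) * hc
      have : a = c * m := by exact_mod_cast this
      exact ⟨c, by linarith⟩
    have : ∑ k ∈ Finset.range m, z ^ (k + 1) = z * ∑ k ∈ Finset.range m, z ^ k := by
      rw [Finset.mul_sum]; exact Finset.sum_congr rfl fun k _ => by ring
    rw [this, geom_sum_eq hz1, hzm]
    simp [h]

lemma squarefree_prod_primes {s : Finset ℕ} (hs : ∀ p ∈ s, p.Prime) :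
    Squarefree (∏ p ∈ s, p) := by
  induction s using Finset.induction with
  | empty => simpa using squarefree_one
  | @insert a t ha ih =>
    rw [Finset.prod_insert ha]
    have hap : a.Prime := hs a (Finset.mem_insert_self a t)
    have hcop : a.Coprime (∏ p ∈ t, p) :=
      Nat.Coprime.prod_right fun p hp =>
        (Nat.coprime_primes hap (hs p (Finset.mem_insert_of_mem hp))).mpr
          (fun h => ha (h ▸ hp))
    rw [Nat.squarefree_mul hcop]
    exact ⟨hap.squarefree, ih fun p hp => hs p (Finset.mem_insert_of_mem hp)⟩

/-- The Ramanujan sum `c_n(r) = ∑_{1 ≤ j ≤ n, gcd(j,n)=1} e^{2πijr/n}`. -/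
noncomputable def ramanujanSum (n : ℕ) (r : ℤ) : ℂ :=
  ∑ j ∈ Finset.Icc 1 n, if Nat.gcd j n = 1 then
    Complex.exp (2 * (Real.pi : ℂ) * Complex.I * (j : ℂ) * (r : ℂ) / (n : ℂ)) else 0

theorem ramanujan_at_n_div_kernel (n : ℕ) (hn : 1 ≤ n) :
    ramanujanSum n ((n / (∏ p ∈ n.primeFactors, p) : ℕ) : ℤ) =
      (-1 : ℂ) ^ n.primeFactors.card * ((n / (∏ p ∈ n.primeFactors, p) : ℕ) : ℂ) := by
  classical
  have hn0 : n ≠ 0 := by omega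
  set γ : ℕ := ∏ p ∈ n.primeFactors, p with hγdef
  have hγdvd : γ ∣ n := Nat.prod_primeFactors_dvd n
  have hγpos : 0 < γ := Nat.pos_of_dvd_of_pos hγdvd hn
  set q : ℕ := n / γ with hqdef
  have hγq : γ * q = n := Nat.mul_div_cancel' hγdvd
  set f : ℕ → ℂ := fun j =>
    Complex.exp (2 * (Real.pi : ℂ) * Complex.I * (j : ℂ) * (((q : ℕ) : ℤ) : ℂ) / (n : ℂ)) with hf
  rw [ramanujanSum]
  have step1 : ∀ j ∈ Finset.Icc 1 n,
      (if Nat.gcd j n = 1 then f j else 0)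
        = ∑ d ∈ n.divisors, if d ∣ j then ((ArithmeticFunction.moebius d : ℤ) : ℂ) * f j else 0 := by
    intro j hj
    have hj1 : 1 ≤ j := (Finset.mem_Icc.mp hj).1
    have hgcd0 : Nat.gcd j n ≠ 0 := Nat.gcd_ne_zero_left (by omega)
    have hdiveq : (Nat.gcd j n).divisors = n.divisors.filter (· ∣ j) := by
      ext d
      simp only [Nat.mem_divisors, Finset.mem_filter, Nat.dvd_gcd_iff, hn0, hgcd0,
        ne_eq, not_false_eq_true, and_true]
      tauto
    have hms := sum_moebius_divisors (Nat.gcd j n)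
    rw [hdiveq, Finset.sum_filter] at hms
    calc (if Nat.gcd j n = 1 then f j else 0)
        = (if Nat.gcd j n = 1 then (1 : ℂ) else 0) * f j := by split <;> simp
      _ = (∑ d ∈ n.divisors, if d ∣ j then ((ArithmeticFunction.moebius d : ℤ) : ℂ) else 0) * f j := by
          rw [hms]
      _ = _ := by rw [Finset.sum_mul]; exact Finset.sum_congr rfl fun d _ => by split <;> simp
  rw [Finset.sum_congr rfl step1, Finset.sum_comm]
  have step2 : ∀ d ∈ n.divisors,
      (∑ j ∈ Finset.Icc 1 n, if d ∣ j then ((ArithmeticFunction.moebius d : ℤ) : ℂ) * f j else 0)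
        = ((ArithmeticFunction.moebius d : ℤ) : ℂ) * (if γ ∣ d then ((n / d : ℕ) : ℂ) else 0) := by
    intro d hd
    obtain ⟨hddvd, -⟩ := Nat.mem_divisors.mp hd
    have hd0 : 0 < d := Nat.pos_of_dvd_of_pos hddvd hn
    set m : ℕ := n / d with hm
    have hdm : d * m = n := Nat.mul_div_cancel' hddvd
    have hm0 : 0 < m := Nat.div_pos (Nat.le_of_dvd hn hddvd) hd0
    have hcond : m ∣ q ↔ γ ∣ d := by
      constructor
      · rintro ⟨s, hs⟩
        refine ⟨s, ?_⟩
        have h1 : d * m = γ * s * m := by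
          rw [hdm, ← hγq, hs]; ring
        exact Nat.eq_of_mul_eq_mul_right hm0 h1
      · rintro ⟨t, rfl⟩
        refine ⟨t, ?_⟩
        have h1 : γ * q = γ * (m * t) := by rw [hγq, ← hdm]; ring
        exact Nat.eq_of_mul_eq_mul_left hγpos h1
    have hbij : ∑ k ∈ Finset.Icc 1 m,
        Complex.exp (2 * (Real.pi : ℂ) * Complex.I * (k : ℂ) * (((q : ℕ) : ℤ) : ℂ) / (m : ℂ))
        = ∑ j ∈ (Finset.Icc 1 n).filter (d ∣ ·), f j := by
      apply Finset.sum_nbij' (fun k => d * k) (fun j => j / d)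
      · intro k hk
        simp only [Finset.mem_Icc] at hk
        simp only [Finset.mem_filter, Finset.mem_Icc]
        refine ⟨⟨by nlinarith [hk.1], ?_⟩, Dvd.intro k rfl⟩
        calc d * k ≤ d * m := Nat.mul_le_mul_left d hk.2
          _ = n := hdm
      · intro j hj
        simp only [Finset.mem_filter, Finset.mem_Icc] at hj
        obtain ⟨⟨hj1, hj2⟩, k, rfl⟩ := hj
        simp only [Finset.mem_Icc]
        rw [Nat.mul_div_cancel_left k hd0]
        constructor
        · by_contra h; push_neg at h
          interval_cases k <;> omega
        · by_contra h; push_neg at h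
          have : d * m < d * k := (Nat.mul_lt_mul_left hd0).mpr h
          omega
      · intro k hk; exact Nat.mul_div_cancel_left k hd0
      · intro j hj
        simp only [Finset.mem_filter] at hj
        exact Nat.mul_div_cancel' hj.2
      · intro k hk
        rw [hf]
        congr 1
        have hdC : (d : ℂ) ≠ 0 := Nat.cast_ne_zero.mpr hd0.ne'
        have hmC : (m : ℂ) ≠ 0 := Nat.cast_ne_zero.mpr hm0.ne'
        rw [← hdm]
        push_cast
        field_simp
    rw [← Finset.sum_filter, ← Finset.mul_sum, ← hbij, exp_sum_Icc m hm0 (q : ℤ)]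
    congr 1
    simp only [Int.natCast_dvd_natCast, hcond]
  rw [Finset.sum_congr rfl step2]
  have hγmem : γ ∈ n.divisors := Nat.mem_divisors.mpr ⟨hγdvd, hn0⟩
  have hprimes : ∀ p ∈ n.primeFactors, p.Prime := fun p hp => Nat.prime_of_mem_primeFactors hp
  have hsf : Squarefree γ := squarefree_prod_primes hprimes
  rw [Finset.sum_eq_single_of_mem γ hγmem ?side]
  case side =>
    intro b hb hbne
    by_cases hγb : γ ∣ b
    · have hbdvd : b ∣ n := (Nat.mem_divisors.mp hb).1
      have hnsf : ¬ Squarefree b := by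
        intro hsb
        apply hbne
        refine Nat.dvd_antisymm ?_ hγb
        calc b = ∏ p ∈ b.primeFactors, p := (Nat.prod_primeFactors_of_squarefree hsb).symm
          _ ∣ ∏ p ∈ n.primeFactors, p :=
            Finset.prod_dvd_prod_of_subset _ _ _ (Nat.primeFactors_mono hbdvd hn0)
      rw [ArithmeticFunction.moebius_eq_zero_of_not_squarefree hnsf]
      simp
    · simp [hγb]
  rw [if_pos (dvd_refl γ)]
  have hμ : ArithmeticFunction.moebius γ = (-1 : ℤ) ^ n.primeFactors.card := by
    rw [ArithmeticFunction.moebius_apply_of_squarefree hsf]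
    congr 1
    have h1 : ArithmeticFunction.cardFactors γ = ArithmeticFunction.cardDistinctFactors γ :=
      ((ArithmeticFunction.cardDistinctFactors_eq_cardFactors_iff_squarefree hγpos.ne').mpr hsf).symm
    rw [h1, ArithmeticFunction.cardDistinctFactors_apply]
    have h2 : γ.primeFactors = n.primeFactors := Nat.primeFactors_prod hprimes
    rw [← h2, Nat.primeFactors, List.card_toFinset]
  rw [hμ]
  push_cast
  ring
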